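/- In the iterative refinement procedure, splitting a node preserves the solution set: if a node u is replaced by nodes u and u' such that u' receives a nonempty subset of u's incoming arcs and a copy of all of u's outgoing arcs (with u keeping the remaining incoming arcs and all outgoing arcs), then the set of root-to-terminal paths' encoded assignments of the resulting diagram equals that of the original diagram. -/

import Mathlib

/-- A layered decision diagram with `n` arc layers. Arcs in layer `i`
carry a value (variable assignment) and a length (objective contribution). -/
structure DD (n : ℕ) where
  V : Type
  Arc : Type
  src : Arc → V
  tgt : Arc → V
  lay : Arc → Fin n
  val : Arc → ℤ
  len : Arc → ℝ
  root : V
  terminal : V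

namespace DD

variable {n : ℕ}

/-- `p` is a root-to-terminal path: one arc per layer, consecutive arcs chained,
starting at the root and ending at the terminal. -/
def IsPath (D : DD n) (p : Fin n → D.Arc) : Prop :=
  (∀ i, D.lay (p i) = i) ∧
  (∀ i : Fin n, i.val = 0 → D.src (p i) = D.root) ∧
  (∀ i : Fin n, i.val + 1 = n → D.tgt (p i) = D.terminal) ∧
  (∀ i : Fin n, ∀ h : i.val + 1 < n, D.tgt (p i) = D.src (p ⟨i.val + 1, h⟩))

/-- The integer point encoded by a path. -/
def point (D : DD n) (p : Fin n → D.Arc) : Fin n → ℤ := fun i => D.val (p i)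

/-- The real point encoded by a path. -/
def pointR (D : DD n) (p : Fin n → D.Arc) : Fin n → ℝ := fun i => (D.val (p i) : ℝ)

/-- The length of a path. -/
def plen (D : DD n) (p : Fin n → D.Arc) : ℝ := ∑ i, D.len (p i)

/-- The solution set encoded by the diagram. -/
def Sol (D : DD n) : Set (Fin n → ℤ) := {x | ∃ p, D.IsPath p ∧ D.point p = x}

end DD

open Classical in
/-- Splitting node `u`: a new node (the `Sum.inr` node) receives the incoming arcs
in `I'` and a duplicate of every outgoing arc of `u`; `u` keeps the remaining
incoming arcs and all its outgoing arcs. -/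
noncomputable def splitDD {n : ℕ} (D : DD n) (u : D.V) (I' : Set D.Arc) : DD n where
  V := D.V ⊕ Unit
  Arc := D.Arc ⊕ {a : D.Arc // D.src a = u}
  src := fun a => match a with
    | .inl a => .inl (D.src a)
    | .inr _ => .inr ()
  tgt := fun a => match a with
    | .inl a => if a ∈ I' then .inr () else .inl (D.tgt a)
    | .inr a => .inl (D.tgt a.1)
  lay := fun a => match a with
    | .inl a => D.lay a
    | .inr a => D.lay a.1
  val := fun a => match a with
    | .inl a => D.val a
    | .inr a => D.val a.1
  len := fun a => match a with
    | .inl a => D.len a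
    | .inr a => D.len a.1
  root := .inl D.root
  terminal := .inl D.terminal

/-- Auxiliary flag: whether position `k` of path `p` should live at the new node. -/
def splitFlag {n : ℕ} (D : DD n) (I' : Set D.Arc) (p : Fin n → D.Arc) : ℕ → Prop
  | 0 => False
  | k+1 => ¬ splitFlag D I' p k ∧ ∃ hk : k < n, p ⟨k, hk⟩ ∈ I'

/-- Splitting an internal node `u` along a nonempty proper subset `I'` of its
incoming arcs preserves the set of encoded assignments. -/
theorem stmt12 {n : ℕ} (D : DD n) (u : D.V) (I' : Set D.Arc)
    (hur : u ≠ D.root) (hut : u ≠ D.terminal)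
    (hI : ∀ a ∈ I', D.tgt a = u)
    (hne : I'.Nonempty)
    (hproper : ∃ a, D.tgt a = u ∧ a ∉ I') :
    (splitDD D u I').Sol = D.Sol := by
  classical
  ext x
  simp only [DD.Sol, Set.mem_setOf_eq]
  constructor
  · rintro ⟨q, ⟨hlay, hsrc, htgt, hchain⟩, hpt⟩
    refine ⟨fun i => Sum.elim id Subtype.val (q i), ⟨?_, ?_, ?_, ?_⟩, ?_⟩
    · intro i
      have h := hlay i
      cases hq : q i with
      | inl a => rw [hq] at h; simp only [hq, Sum.elim_inl, id_eq]; simpa [splitDD] using h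
      | inr a => rw [hq] at h; simp only [hq, Sum.elim_inr]; simpa [splitDD] using h
    · intro i hi
      have h := hsrc i hi
      cases hq : q i with
      | inl a => rw [hq] at h; simp only [hq, Sum.elim_inl, id_eq]; simpa [splitDD] using h
      | inr a => rw [hq] at h; simp [splitDD] at h
    · intro i hi
      have h := htgt i hi
      cases hq : q i with
      | inl a =>
        rw [hq] at h
        simp only [hq, Sum.elim_inl, id_eq]
        by_cases ha : a ∈ I'
        · simp [splitDD, ha] at h
        · simpa [splitDD, ha] using h
      | inr a => rw [hq] at h; simp only [hq, Sum.elim_inr]; simpa [splitDD] using h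
    · intro i hi
      have h := hchain i hi
      cases hq : q i with
      | inl a =>
        cases hq' : q ⟨i.val + 1, hi⟩ with
        | inl b =>
          rw [hq, hq'] at h
          by_cases ha : a ∈ I'
          · simp [splitDD, ha] at h
          · simp only [hq, hq', Sum.elim_inl, id]
            simpa [splitDD, ha] using h
        | inr b =>
          rw [hq, hq'] at h
          by_cases ha : a ∈ I'
          · simp only [hq, hq', Sum.elim_inl, Sum.elim_inr, id]
            rw [hI a ha, b.2]
          · simp [splitDD, ha] at h
      | inr a =>
        cases hq' : q ⟨i.val + 1, hi⟩ with
        | inl b =>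
          rw [hq, hq'] at h
          simp only [hq, hq', Sum.elim_inl, Sum.elim_inr, id]
          simpa [splitDD] using h
        | inr b =>
          rw [hq, hq'] at h
          simp [splitDD] at h
    · funext i
      have h := congrFun hpt i
      cases hq : q i with
      | inl a =>
        simp only [DD.point, hq] at h ⊢
        simpa [splitDD] using h
      | inr a =>
        simp only [DD.point, hq] at h ⊢
        simpa [splitDD] using h
    
  · rintro ⟨p, ⟨hlay, hsrc, htgt, hchain⟩, hpt⟩
    have key : ∀ i : Fin n, splitFlag D I' p i.val → D.src (p i) = u := by
      intro i hf
      have hin := i.isLt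
      obtain ⟨k, hk⟩ : ∃ k, i.val = k + 1 := by
        cases h : i.val with
        | zero => rw [h] at hf; exact absurd hf (by simp [splitFlag])
        | succ k => exact ⟨k, rfl⟩
      rw [hk] at hf
      obtain ⟨-, hkn, hmem⟩ := hf
      have hk1 : k + 1 < n := by omega
      have hc := hchain ⟨k, hkn⟩ hk1
      have heq : (⟨k + 1, hk1⟩ : Fin n) = i := Fin.ext (by simp [hk])
      rw [heq] at hc
      rw [← hc]
      exact hI _ hmem
    refine ⟨fun i => if h : splitFlag D I' p i.val then
        Sum.inr ⟨p i, key i h⟩ else Sum.inl (p i), ⟨?_, ?_, ?_, ?_⟩, ?_⟩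
    · intro i
      by_cases h : splitFlag D I' p i.val <;> simp [h, splitDD, hlay i]
    · intro i hi
      have h0 : ¬ splitFlag D I' p i.val := by rw [hi]; exact not_false
      simp only [h0, dite_false]
      dsimp only [splitDD]; rw [dif_neg h0]
      simp [splitDD, hsrc i hi]
    · intro i hi
      by_cases h : splitFlag D I' p i.val
      · simp only [h, dite_true]
        dsimp only [splitDD]; rw [dif_pos h]
        simp [splitDD, htgt i hi]
      · simp only [h, dite_false]
        dsimp only [splitDD]; rw [dif_neg h]
        have hni : p i ∉ I' := by
          intro hmem
          exact hut ((hI _ hmem).symm.trans (htgt i hi))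
        simp [splitDD, hni, htgt i hi]
    · intro i hi
      have hflag : splitFlag D I' p (i.val + 1) ↔
          (¬ splitFlag D I' p i.val ∧ p i ∈ I') := by
        constructor
        · rintro ⟨h1, hk, h2⟩
          exact ⟨h1, by rwa [show (⟨i.val, hk⟩ : Fin n) = i from Fin.ext rfl] at h2⟩
        · rintro ⟨h1, h2⟩
          exact ⟨h1, i.isLt, by rwa [show (⟨i.val, i.isLt⟩ : Fin n) = i from Fin.ext rfl]⟩
      by_cases h : splitFlag D I' p i.val
      · have h' : ¬ splitFlag D I' p (i.val + 1) := by
          rw [hflag]; rintro ⟨h1, -⟩; exact h1 h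
        simp only [h, h', dite_true, dite_false]
        dsimp only [splitDD]; rw [dif_pos h, dif_neg h']
        simp [splitDD, hchain i hi]
      · by_cases hm : p i ∈ I'
        · have h' : splitFlag D I' p (i.val + 1) := hflag.mpr ⟨h, hm⟩
          simp only [h, h', dite_true, dite_false]
          dsimp only [splitDD]; rw [dif_neg h, dif_pos h']
          simp [splitDD, hm]
        · have h' : ¬ splitFlag D I' p (i.val + 1) := by
            rw [hflag]; rintro ⟨-, h2⟩; exact hm h2
          simp only [h, h', dite_false]
          dsimp only [splitDD]; rw [dif_neg h, dif_neg h']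
          simp [splitDD, hm, hchain i hi]
    · funext i
      by_cases h : splitFlag D I' p i.val <;>
        simpa [DD.point, splitDD, h] using congrFun hpt i
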